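/- Let {e_k} be a frame over X with frame operator S and bounds B1, B2, and set R := I − (2/(B1+B2))S. Then ‖R‖ ≤ (B2−B1)/(B2+B1) < 1, and the dual frame elements satisfy ẽ_k = (2/(B1+B2)) Σ_{j=0}^∞ R^j e_k, with the series converging in norm. -/

import Mathlib

open scoped ComplexInnerProductSpace

/-- Norm bound for a symmetric operator from its quadratic form. -/
lemma norm_le_of_symm_quadform
    {X : Type*} [NormedAddCommGroup X] [InnerProductSpace ℂ X]
    (A : X →L[ℂ] X) (M : ℝ) (hM : 0 ≤ M)
    (hsymm : ∀ x y : X, ⟪A x, y⟫ = ⟪x, A y⟫)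
    (hq : ∀ x : X, |Complex.re ⟪x, A x⟫| ≤ M * ‖x‖ ^ 2) : ‖A‖ ≤ M := by
  apply A.opNorm_le_bound hM
  intro x
  by_cases hx : A x = 0
  · simp [hx]
    positivity
  have hAx : (0:ℝ) < ‖A x‖ := norm_pos_iff.mpr hx
  set y : X := ((‖x‖ / ‖A x‖ : ℝ)) • A x with hy
  have hyn : ‖y‖ = ‖x‖ := by
    rw [hy, norm_smul]
    simp [abs_div, abs_of_nonneg (norm_nonneg x), abs_of_pos hAx]
    field_simp
  -- polarization
  have hre : ∀ u v : X, Complex.re ⟪v, A u⟫ =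
      (Complex.re ⟪u + v, A (u + v)⟫ - Complex.re ⟪u - v, A (u - v)⟫) / 4 := by
    intro u v
    have h1 : ⟪u, A v⟫ = ⟪A u, v⟫ := (hsymm u v).symm
    have h2 : Complex.re ⟪u, A v⟫ = Complex.re ⟪v, A u⟫ := by
      rw [h1, ← inner_conj_symm (A u) v, Complex.conj_re]
    have e1 : ⟪u + v, A (u + v)⟫ = ⟪u, A u⟫ + ⟪u, A v⟫ + ⟪v, A u⟫ + ⟪v, A v⟫ := by
      simp [map_add, inner_add_left, inner_add_right]; ring
    have e2 : ⟪u - v, A (u - v)⟫ = ⟪u, A u⟫ - ⟪u, A v⟫ - ⟪v, A u⟫ + ⟪v, A v⟫ := by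
      simp [map_sub, inner_sub_left, inner_sub_right]; ring
    rw [e1, e2]
    simp [Complex.add_re, Complex.sub_re, h2]
    ring
  have key : 4 * Complex.re ⟪y, A x⟫ ≤ 4 * (M * ‖x‖ ^ 2) := by
    have := hre x y
    have hq1 := hq (x + y)
    have hq2 := hq (x - y)
    have hpar := parallelogram_law_with_norm ℂ x y
    have b1 : Complex.re ⟪x + y, A (x + y)⟫ ≤ M * ‖x + y‖ ^ 2 :=
      le_trans (le_abs_self _) (hq (x + y))
    have b2 : -(M * ‖x - y‖ ^ 2) ≤ Complex.re ⟪x - y, A (x - y)⟫ :=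
      neg_le_of_abs_le (hq (x - y))
    have : 4 * Complex.re ⟪y, A x⟫ ≤ M * ‖x + y‖ ^ 2 + M * ‖x - y‖ ^ 2 := by
      rw [hre x y]; linarith
    calc 4 * Complex.re ⟪y, A x⟫ ≤ M * ‖x + y‖ ^ 2 + M * ‖x - y‖ ^ 2 := this
    _ = M * (‖x + y‖ ^ 2 + ‖x - y‖ ^ 2) := by ring
    _ = M * (2 * (‖x‖ ^ 2 + ‖y‖ ^ 2)) := by
          have hpar' : ‖x + y‖ ^ 2 + ‖x - y‖ ^ 2 = 2 * (‖x‖ ^ 2 + ‖y‖ ^ 2) := by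
            simpa [pow_two] using hpar
          rw [hpar']
    _ = 4 * (M * ‖x‖ ^ 2) := by rw [hyn]; ring
  have h3 : Complex.re ⟪A x, A x⟫ = ‖A x‖ ^ 2 := by
    simpa using inner_self_eq_norm_sq (𝕜 := ℂ) (A x)
  have hrey' : Complex.re ⟪y, A x⟫ = ‖x‖ * ‖A x‖ := by
    rw [hy, RCLike.real_smul_eq_coe_smul (K := ℂ), inner_smul_real_left]
    rw [Complex.real_smul, Complex.re_ofReal_mul, h3]
    field_simp
  rw [hrey'] at key
  rcases eq_or_lt_of_le (norm_nonneg x) with h0 | h0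
  · have hx0 : x = 0 := norm_eq_zero.mp h0.symm
    exact absurd (by simp [hx0]) hx
  · nlinarith
/-- With `R := I − (2/(B1+B2))S` one has `‖R‖ ≤ (B2−B1)/(B2+B1) < 1`, and the dual
frame elements satisfy `ẽ k = (2/(B1+B2)) ∑_{j=0}^∞ R^j (e k)`, the series converging
in norm. -/
theorem dual_frame_neumann_series
    {X : Type*} [NormedAddCommGroup X] [InnerProductSpace ℂ X] [CompleteSpace X]
    (e : ℕ → X) (B1 B2 : ℝ) (hB1 : 0 < B1) (hB2 : 0 < B2) (hB12 : B1 ≤ B2)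
    (hsum : ∀ x : X, Summable fun k => ‖⟪e k, x⟫‖ ^ 2)
    (hlow : ∀ x : X, B1 * ‖x‖ ^ 2 ≤ ∑' k, ‖⟪e k, x⟫‖ ^ 2)
    (hupp : ∀ x : X, ∑' k, ‖⟪e k, x⟫‖ ^ 2 ≤ B2 * ‖x‖ ^ 2)
    (S T : X →L[ℂ] X)
    (hS : ∀ x : X, HasSum (fun k => ⟪e k, x⟫ • e k) (S x))
    (hST : S ∘L T = 1) (hTS : T ∘L S = 1)
    (R : X →L[ℂ] X)
    (hR : R = 1 - ((2 / (B1 + B2) : ℝ) : ℂ) • S) :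
    ‖R‖ ≤ (B2 - B1) / (B2 + B1) ∧ (B2 - B1) / (B2 + B1) < 1 ∧
    ∀ k, HasSum (fun j : ℕ => ((2 / (B1 + B2) : ℝ) : ℂ) • (R ^ j) (e k)) (T (e k)) := by
  have hBsum : (0:ℝ) < B1 + B2 := by linarith
  set c : ℝ := 2 / (B1 + B2) with hc
  set M : ℝ := (B2 - B1) / (B2 + B1) with hMdef
  have hM : 0 ≤ M := div_nonneg (by linarith) (by linarith)
  have hM1 : M < 1 := by
    rw [hMdef, div_lt_one (by linarith)]; linarith
  -- quadratic form of S
  have hQS : ∀ x : X, ⟪x, S x⟫ = ((∑' k, ‖⟪e k, x⟫‖ ^ 2 : ℝ) : ℂ) := by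
    intro x
    have h1 : HasSum (fun k => ⟪x, ⟪e k, x⟫ • e k⟫) ⟪x, S x⟫ :=
      (innerSL ℂ x).hasSum (hS x)
    have h2 : ∀ k, ⟪x, ⟪e k, x⟫ • e k⟫ = ((‖⟪e k, x⟫‖ ^ 2 : ℝ) : ℂ) := by
      intro k
      rw [inner_smul_right, ← inner_conj_symm x (e k), Complex.mul_conj]
      simp [Complex.normSq_eq_norm_sq]
    simp only [h2] at h1
    have h4 : HasSum (fun k => ((‖⟪e k, x⟫‖ ^ 2 : ℝ) : ℂ))
        ((∑' k, ‖⟪e k, x⟫‖ ^ 2 : ℝ) : ℂ) :=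
      Complex.ofRealCLM.hasSum (hsum x).hasSum
    exact (h1.unique h4)
  -- symmetry of S
  have hSsym : ∀ x y : X, ⟪S x, y⟫ = ⟪x, S y⟫ := by
    intro x y
    have hx : HasSum (fun k => ⟪e k, x⟫ * ⟪y, e k⟫) ⟪y, S x⟫ := by
      simpa [inner_smul_right] using (innerSL ℂ y).hasSum (hS x)
    have hy : HasSum (fun k => ⟪e k, y⟫ * ⟪x, e k⟫) ⟪x, S y⟫ := by
      simpa [inner_smul_right] using (innerSL ℂ x).hasSum (hS y)
    have hx' : HasSum (fun k => (starRingEnd ℂ) (⟪e k, x⟫ * ⟪y, e k⟫))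
        ((starRingEnd ℂ) ⟪y, S x⟫) :=
      hx.map (starRingEnd ℂ) continuous_star
    have hterm : ∀ k, (starRingEnd ℂ) (⟪e k, x⟫ * ⟪y, e k⟫) = ⟪e k, y⟫ * ⟪x, e k⟫ := by
      intro k
      rw [map_mul, inner_conj_symm, inner_conj_symm]
      ring
    simp only [hterm] at hx'
    have := hx'.unique hy
    rw [← inner_conj_symm (S x) y, this]
  -- symmetry of R
  have hRsym : ∀ x y : X, ⟪R x, y⟫ = ⟪x, R y⟫ := by
    intro x y
    simp only [hR, ContinuousLinearMap.sub_apply, ContinuousLinearMap.one_apply,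
      ContinuousLinearMap.smul_apply, inner_sub_left, inner_sub_right,
      inner_smul_left, inner_smul_right, Complex.conj_ofReal, hSsym x y]
  -- quadratic form bound for R
  have hqR : ∀ x : X, |Complex.re ⟪x, R x⟫| ≤ M * ‖x‖ ^ 2 := by
    intro x
    set t : ℝ := ∑' k, ‖⟪e k, x⟫‖ ^ 2 with ht
    have hxx : Complex.re ⟪x, x⟫ = ‖x‖ ^ 2 := by
      simpa using inner_self_eq_norm_sq (𝕜 := ℂ) x
    have hform : Complex.re ⟪x, R x⟫ = ‖x‖ ^ 2 - c * t := by
      rw [hR]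
      simp only [ContinuousLinearMap.sub_apply, ContinuousLinearMap.one_apply,
        ContinuousLinearMap.smul_apply, inner_sub_right, inner_smul_right, hQS x]
      rw [Complex.sub_re, hxx, ← Complex.ofReal_mul, Complex.ofReal_re, ht]
    rw [hform, abs_le]
    have hl := hlow x
    have hu := hupp x
    constructor
    · have h2t : c * t ≤ c * (B2 * ‖x‖ ^ 2) :=
        mul_le_mul_of_nonneg_left hu (by positivity)
      have heq : ‖x‖ ^ 2 - c * (B2 * ‖x‖ ^ 2) = -(M * ‖x‖ ^ 2) := by
        rw [hc, hMdef]; field_simp; ring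
      linarith
    · have h2t : c * (B1 * ‖x‖ ^ 2) ≤ c * t :=
        mul_le_mul_of_nonneg_left hl (by positivity)
      have heq : ‖x‖ ^ 2 - c * (B1 * ‖x‖ ^ 2) = M * ‖x‖ ^ 2 := by
        rw [hc, hMdef]; field_simp; ring
      linarith
  have hRnorm : ‖R‖ ≤ M := norm_le_of_symm_quadform R M hM hRsym hqR
  have hRlt1 : ‖R‖ < 1 := lt_of_le_of_lt hRnorm hM1
  refine ⟨hRnorm, hM1, ?_⟩
  intro k
  have hgeo : Summable (fun j : ℕ => R ^ j) := summable_geometric_of_norm_lt_one hRlt1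
  have hG : HasSum (fun j : ℕ => R ^ j) (∑' j : ℕ, R ^ j) := hgeo.hasSum
  have hmul : ((1 : X →L[ℂ] X) - R) * (∑' j : ℕ, R ^ j) = 1 := mul_neg_geom_series R hRlt1
  have h1R : (1 : X →L[ℂ] X) - R = ((c : ℝ) : ℂ) • S := by rw [hR]; abel
  rw [h1R] at hmul
  set G : X := (∑' j : ℕ, R ^ j) (e k) with hGdef
  have hk : HasSum (fun j : ℕ => (R ^ j) (e k)) G :=
    (ContinuousLinearMap.apply ℂ X (e k)).hasSum hG
  have hGe : ((c : ℝ) : ℂ) • S G = e k := by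
    have := DFunLike.congr_fun hmul (e k)
    simpa [ContinuousLinearMap.mul_apply] using this
  have hTSG : T (S G) = G := by
    have := DFunLike.congr_fun hTS (S G)
    simpa using DFunLike.congr_fun hTS G
  have hkey : ((c : ℝ) : ℂ) • G = T (e k) := by
    have := congrArg T hGe
    rw [map_smul] at this
    rw [← this, hTSG]
  have hk' : HasSum (fun j : ℕ => ((c : ℝ) : ℂ) • (R ^ j) (e k)) (((c : ℝ) : ℂ) • G) :=
    hk.const_smul _
  rwa [hkey] at hk'
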